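/- Let F be a field, k ≥ 1 and let A be an m×n matrix over F. Then R^Σ_{m×n}(⊗^k A) = k · vec(A) · vec(⊗^{k-1} A)ᵀ. -/

import Mathlib

open Matrix Kronecker

/-- `vec A` is the vector of entries of the matrix `A`, indexed by pairs. -/
def vec {F : Type*} [Field F] {α β : Type*} (A : Matrix α β F) : α × β → F :=
  fun p => A p.1 p.2

/-- The rearrangement operator `R_{m×n}`:
`R M ((i,j),(k,l)) = M ((i,k),(j,l))`. -/
def R {F : Type*} [Field F] {m n : ℕ}
    (M : Matrix (Fin m × Fin m) (Fin n × Fin n) F) :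
    Matrix (Fin m × Fin n) (Fin m × Fin n) F :=
  fun p q => M (p.1, q.1) (p.2, q.2)

/-- The `j`-th rearrangement operator `R^{(j)}_{m×n}` on `m^k × n^k` matrices
(here with `k` replaced by `k+1` so that `k ≥ 1` automatically): the entry at
row `(a,b)` and column `(r,c)` is the entry of `M` at the tuples obtained from
`r` and `c` by inserting `a` resp. `b` at position `j`. -/
def Rj {F : Type*} [Field F] {m n k : ℕ} (j : Fin (k + 1))
    (M : Matrix (Fin (k + 1) → Fin m) (Fin (k + 1) → Fin n) F) :
    Matrix (Fin m × Fin n) ((Fin k → Fin m) × (Fin k → Fin n)) F :=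
  fun p q => M (j.insertNth p.1 q.1) (j.insertNth p.2 q.2)

/-- `R^Σ_{m×n} = Σ_j R^{(j)}_{m×n}`. -/
def RSigma {F : Type*} [Field F] {m n k : ℕ}
    (M : Matrix (Fin (k + 1) → Fin m) (Fin (k + 1) → Fin n) F) :
    Matrix (Fin m × Fin n) ((Fin k → Fin m) × (Fin k → Fin n)) F :=
  ∑ j : Fin (k + 1), Rj j M

/-- The `k`-th Kronecker power of an `m×n` matrix, indexed by tuples. -/
def kpow {F : Type*} [Field F] {m n : ℕ} (A : Matrix (Fin m) (Fin n) F) (k : ℕ) :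
    Matrix (Fin k → Fin m) (Fin k → Fin n) F :=
  fun r c => ∏ i, A (r i) (c i)

/-- The `k`-fold Kronecker product of a family of `m×n` matrices,
indexed by tuples. -/
def kprodFam {F : Type*} [Field F] {m n k : ℕ}
    (A : Fin k → Matrix (Fin m) (Fin n) F) :
    Matrix (Fin k → Fin m) (Fin k → Fin n) F :=
  fun r c => ∏ i, A i (r i) (c i)

/-- `R^Σ(⊗^k A) = k ⬝ vec(A) vec(⊗^{k-1} A)ᵀ`
(here the order `k ≥ 1` of the paper is represented as `k + 1`). -/
theorem stmt_9 {F : Type*} [Field F] {m n k : ℕ}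
    (A : Matrix (Fin m) (Fin n) F) :
    RSigma (kpow A (k + 1)) =
      ((k + 1 : ℕ) : F) • vecMulVec (_root_.vec A) (_root_.vec (kpow A k)) := by
  ext ⟨a, b⟩ ⟨r, c⟩
  have h : ∀ j : Fin (k + 1), Rj j (kpow A (k + 1)) (a, b) (r, c)
      = A a b * ∏ i, A (r i) (c i) := by
    intro j
    simp [Rj, kpow, Fin.prod_univ_succAbove _ j]
  simp [RSigma, Matrix.sum_apply, h, vecMulVec, _root_.vec, kpow, Matrix.smul_apply,
    Finset.sum_const, mul_comm]
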